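/- arXiv:2004.06398 — 3 statements merged into one kernel-verified Lean document; each statement's English description precedes it below -/
import Mathlib

section
/- For every formula A of the modal language with a single unary modality □ that contains at most the propositional variable p: if GL proves A, then IL proves A†, where A† is the closed interpretability formula obtained from A by the translation †. -/
/-- Formulas of the modal language with a single unary modality `□`.
Variable number `0` plays the role of the propositional variable `p`. -/
inductive GLForm : Type
  | bot : GLForm
  | var : ℕ → GLForm
  | imp : GLForm → GLForm → GLForm
  | box : GLForm → GLForm

namespace GLForm

/-- `¬A` abbreviates `A → ⊥`. -/
def neg (A : GLForm) : GLForm := A.imp .bot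

/-- `⊤` abbreviates `¬⊥`. -/
def top : GLForm := neg .bot

/-- `◇A` abbreviates `¬□¬A`. -/
def dia (A : GLForm) : GLForm := (A.neg.box).neg

/-- `A` contains at most the propositional variable `p` (i.e. variable number `0`). -/
def onlyP : GLForm → Prop
  | bot => True
  | var n => n = 0
  | imp A B => A.onlyP ∧ B.onlyP
  | box A => A.onlyP

end GLForm

/-- `A` is a propositional tautology: it is true under every assignment of truth
values to formulas which evaluates `⊥` as false and respects implication (so
boxed formulas are treated as atoms). -/
def GLTaut (A : GLForm) : Prop :=
  ∀ v : GLForm → Prop, (v .bot ↔ False) →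
    (∀ B C : GLForm, v (B.imp C) ↔ (v B → v C)) → v A

/-- Provability in Gödel–Löb's logic `GL`: all propositional tautologies, the
distribution axiom, Löb's axiom, and the rules modus ponens and necessitation. -/
inductive GLProv : GLForm → Prop
  | taut {A : GLForm} : GLTaut A → GLProv A
  | distr (A B : GLForm) : GLProv (((A.imp B).box).imp ((A.box).imp B.box))
  | lob (A : GLForm) : GLProv ((((A.box).imp A).box).imp A.box)
  | mp {A B : GLForm} : GLProv (A.imp B) → GLProv A → GLProv B
  | nec {A : GLForm} : GLProv A → GLProv A.box

/-- Formulas of the interpretability language: a unary modality `□` and a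
binary modality `▷`. -/
inductive ILForm : Type
  | bot : ILForm
  | var : ℕ → ILForm
  | imp : ILForm → ILForm → ILForm
  | box : ILForm → ILForm
  | rhd : ILForm → ILForm → ILForm

namespace ILForm

/-- `¬A` abbreviates `A → ⊥`. -/
def neg (A : ILForm) : ILForm := A.imp .bot

/-- `⊤` abbreviates `¬⊥`. -/
def top : ILForm := neg .bot

/-- `◇A` abbreviates `¬□¬A`. -/
def dia (A : ILForm) : ILForm := (A.neg.box).neg

/-- `A ∧ B` abbreviates `¬(A → ¬B)`. -/
def conj (A B : ILForm) : ILForm := (A.imp B.neg).neg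

/-- `A ∨ B` abbreviates `¬A → B`. -/
def disj (A B : ILForm) : ILForm := (A.neg).imp B

/-- `A ↔ B` abbreviates `(A → B) ∧ (B → A)`. -/
def iffF (A B : ILForm) : ILForm := (A.imp B).conj (B.imp A)

/-- `A` is closed, i.e. contains no propositional variables. -/
def closed : ILForm → Prop
  | bot => True
  | var _ => False
  | imp A B => A.closed ∧ B.closed
  | box A => A.closed
  | rhd A B => A.closed ∧ B.closed

end ILForm

/-- `A` is a propositional tautology in the interpretability language. -/
def ILTaut (A : ILForm) : Prop :=
  ∀ v : ILForm → Prop, (v .bot ↔ False) →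
    (∀ B C : ILForm, v (B.imp C) ↔ (v B → v C)) → v A

/-- Provability in the basic interpretability logic `IL`: all propositional
tautologies, the GL axioms, J1–J5, modus ponens and necessitation. -/
inductive ILProv : ILForm → Prop
  | taut {A : ILForm} : ILTaut A → ILProv A
  | distr (A B : ILForm) : ILProv (((A.imp B).box).imp ((A.box).imp B.box))
  | lob (A : ILForm) : ILProv ((((A.box).imp A).box).imp A.box)
  | J1 (A B : ILForm) : ILProv (((A.imp B).box).imp (A.rhd B))
  | J2 (A B C : ILForm) : ILProv (((A.rhd B).conj (B.rhd C)).imp (A.rhd C))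
  | J3 (A B C : ILForm) : ILProv (((A.rhd C).conj (B.rhd C)).imp ((A.disj B).rhd C))
  | J4 (A B : ILForm) : ILProv ((A.rhd B).imp ((A.dia).imp B.dia))
  | J5 (A : ILForm) : ILProv ((A.dia).rhd A)
  | mp {A B : ILForm} : ILProv (A.imp B) → ILProv A → ILProv B
  | nec {A : ILForm} : ILProv A → ILProv A.box

/-- The translation of the variable `p`: the formula `◇◇⊤ → (⊤ ▷ ◇⊤)`. -/
def pDag : ILForm := (ILForm.top.dia.dia).imp (ILForm.top.rhd ILForm.top.dia)

/-- The translation `†` of one-variable `GL`-formulas into closed `IL`-formulas: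
`⊥† = ⊥`, `p† = ◇◇⊤ → (⊤ ▷ ◇⊤)`, `(A→B)† = A† → B†`, `(□A)† = □(◇◇⊤ → A†)`. -/
def dag : GLForm → ILForm
  | .bot => .bot
  | .var _ => pDag
  | .imp A B => (dag A).imp (dag B)
  | .box A => ((ILForm.top.dia.dia).imp (dag A)).box

lemma ILProv.reg {A B : ILForm} (h : ILProv (A.imp B)) :
    ILProv ((A.box).imp B.box) :=
  ILProv.mp (ILProv.distr A B) (ILProv.nec h)

lemma ILProv.imp_trans {A B C : ILForm} (h1 : ILProv (A.imp B))
    (h2 : ILProv (B.imp C)) : ILProv (A.imp C) := by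
  have t : ILTaut ((A.imp B).imp ((B.imp C).imp (A.imp C))) := by
    intro v hbot himp
    simp only [himp]; tauto
  exact ILProv.mp (ILProv.mp (ILProv.taut t) h1) h2

/-- If a formula `A` of the modal language with a single unary modality `□`
contains at most the propositional variable `p` and `GL ⊢ A`, then `IL ⊢ A†`. -/
theorem GL_proves_implies_IL_proves_dag (A : GLForm) (hA : A.onlyP)
    (h : GLProv A) : ILProv (dag A) := by
  clear hA
  induction h with
  | @taut A hA =>
      apply ILProv.taut
      intro v hbot himp
      exact hA (fun B => v (dag B)) hbot (fun B C => himp (dag B) (dag C))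
  | distr A B =>
      set E := ILForm.top.dia.dia
      set X := dag A
      set Y := dag B
      have t : ILTaut ((E.imp (X.imp Y)).imp ((E.imp X).imp (E.imp Y))) := by
        intro v hbot himp; simp only [himp]; tauto
      exact ILProv.imp_trans (ILProv.reg (ILProv.taut t))
        (ILProv.distr (E.imp X) (E.imp Y))
  | lob A =>
      set E := ILForm.top.dia.dia
      set X := dag A
      set Y := E.imp X
      have t : ILTaut ((E.imp ((Y.box).imp X)).imp ((Y.box).imp Y)) := by
        intro v hbot himp; simp only [himp, Y]; tauto
      exact ILProv.imp_trans (ILProv.reg (ILProv.taut t)) (ILProv.lob Y)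
  | mp h1 h2 ih1 ih2 =>
      exact ILProv.mp ih1 ih2
  | @nec A h ih =>
      apply ILProv.nec
      have t : ILTaut ((dag A).imp ((ILForm.top.dia.dia).imp (dag A))) := by
        intro v hbot himp; simp only [himp]; tauto
      exact ILProv.mp (ILProv.taut t) ih
end

section
/- For every formula A of the modal language with a single unary modality □ that contains at most the propositional variable p: if IL proves A†, then GL proves A, where A† is the closed interpretability formula obtained from A by the translation †. -/
deriving instance DecidableEq for GLForm

namespace GLAux
open GLForm

/-- Implication from a list of premises. -/
def listImp (L : List GLForm) (X : GLForm) : GLForm := L.foldr .imp X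

@[simp] lemma listImp_nil (X : GLForm) : listImp [] X = X := rfl
@[simp] lemma listImp_cons (B : GLForm) (L : List GLForm) (X : GLForm) :
    listImp (B :: L) X = B.imp (listImp L X) := rfl

lemma listImp_append (L₁ L₂ : List GLForm) (X : GLForm) :
    listImp (L₁ ++ L₂) X = listImp L₁ (listImp L₂ X) :=
  List.foldr_append

lemma vList {v : GLForm → Prop} (hi : ∀ B C, v (B.imp C) ↔ (v B → v C))
    (L : List GLForm) (X : GLForm) :
    v (listImp L X) ↔ ((∀ C ∈ L, v C) → v X) := by
  induction L with
  | nil => simp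
  | cons B L ih =>
      rw [listImp_cons, hi, ih]
      constructor
      · intro h hall
        exact h (hall _ List.mem_cons_self) fun C hC => hall C (List.mem_cons_of_mem _ hC)
      · intro h hB hall
        refine h ?_
        intro C hC
        rcases List.mem_cons.1 hC with rfl | hC
        · exact hB
        · exact hall C hC

lemma cut {X Y : GLForm} (h : GLProv X) (t : GLTaut (X.imp Y)) : GLProv Y :=
  (GLProv.taut t).mp h

lemma cut2 {X Y Z : GLForm} (h1 : GLProv X) (h2 : GLProv Y)
    (t : GLTaut (X.imp (Y.imp Z))) : GLProv Z :=
  ((GLProv.taut t).mp h1).mp h2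

lemma swap₁ {P X : GLForm} {L : List GLForm} (h : GLProv (P.imp (listImp L X))) :
    GLProv (listImp L (P.imp X)) := by
  refine cut h ?_
  intro v hb hi
  simp only [hi, vList hi]
  tauto

lemma swap₂ {P X : GLForm} {L : List GLForm} (h : GLProv (listImp L (P.imp X))) :
    GLProv (P.imp (listImp L X)) := by
  refine cut h ?_
  intro v hb hi
  simp only [hi, vList hi]
  tauto

lemma listImp_mp {X Y : GLForm} {L : List GLForm} (h1 : GLProv (listImp L X))
    (h2 : GLProv (X.imp Y)) : GLProv (listImp L Y) := by
  refine cut2 h1 h2 ?_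
  intro v hb hi
  simp only [hi, vList hi]
  tauto

/-- Box a whole derivation-from-context. -/
lemma boxContext : ∀ {L : List GLForm} {X : GLForm},
    GLProv (listImp L X) → GLProv (listImp (L.map .box) X.box)
  | [], X, h => h.nec
  | B :: L, X, h => by
      have h1 : GLProv (listImp L (B.imp X)) := swap₁ h
      have h2 := boxContext h1
      have h3 : GLProv (listImp (L.map .box) ((B.box).imp X.box)) :=
        listImp_mp h2 (GLProv.distr B X)
      exact swap₂ h3

/-- The 4 axiom is derivable in GL. -/
lemma four (C : GLForm) : GLProv ((C.box).imp (C.box.box)) := by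
  set X : GLForm := (C.imp (C.box).neg).neg with hX
  have t0 : GLProv (X.imp C) := by
    refine GLProv.taut ?_
    intro v hb hi
    simp only [hX, GLForm.neg, hi, hb]
    tauto
  have t1 : GLProv (X.imp C.box) := by
    refine GLProv.taut ?_
    intro v hb hi
    simp only [hX, GLForm.neg, hi, hb]
    tauto
  have t0b : GLProv ((X.box).imp C.box) := (GLProv.distr X C).mp t0.nec
  have t1b : GLProv ((X.box).imp (C.box.box)) := (GLProv.distr X C.box).mp t1.nec
  have s1 : GLProv (C.imp ((X.box).imp X)) := by
    refine cut t0b ?_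
    intro v hb hi
    simp only [hX, GLForm.neg, hi, hb]
    tauto
  have s2 : GLProv ((C.box).imp (((X.box).imp X).box)) :=
    (GLProv.distr C ((X.box).imp X)).mp s1.nec
  have s3 : GLProv ((C.box).imp X.box) := by
    refine cut2 s2 (GLProv.lob X) ?_
    intro v hb hi
    simp only [hi]
    tauto
  refine cut2 s3 t1b ?_
  intro v hb hi
  simp only [hi]
  tauto

/-- Replace doubly boxed premises by singly boxed ones, using the 4 axiom. -/
lemma unbox : ∀ {bl : List GLForm} {X : GLForm},
    GLProv (listImp (bl.map (fun C => C.box.box)) X) →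
    GLProv (listImp (bl.map (fun C => C.box)) X)
  | [], X, h => h
  | C :: bl, X, h => by
      have h1 : GLProv (listImp (bl.map (fun C => C.box.box)) ((C.box.box).imp X)) :=
        swap₁ h
      have h2 := unbox h1
      have h3 : GLProv (((C.box.box).imp X).imp ((C.box).imp X)) := by
        refine cut (four C) ?_
        intro v hb hi
        simp only [hi]
        tauto
      exact swap₂ (listImp_mp h2 h3)

end GLAux

namespace GLAux
open GLForm

def Con (L : List GLForm) : Prop := ¬ GLProv (listImp L .bot)

lemma Con.subset {L L' : List GLForm} (h : ∀ C ∈ L', C ∈ L) (hc : Con L) : Con L' := by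
  intro hp
  refine hc (cut hp ?_)
  intro v hb hi
  simp only [hi, vList hi]
  intro h1 h2
  exact h1 fun C hC => h2 C (h C hC)

lemma con_cases {B : GLForm} {L : List GLForm} (h : Con L) :
    Con (B :: L) ∨ Con (B.neg :: L) := by
  by_contra hc
  push_neg at hc
  refine h (cut2 (not_not.1 hc.1) (not_not.1 hc.2) ?_)
  intro v hb hi
  simp only [GLForm.neg, vList hi, List.mem_cons, hi, hb]
  intro h1 h2 hall
  by_cases hB : v B
  · refine h1 ?_
    rintro C (rfl | hC)
    · exact hB
    · exact hall C hC
  · refine h2 ?_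
    rintro C (rfl | hC)
    · rw [hi, hb]; exact fun hvB => hB hvB
    · exact hall C hC

def signed (l : List GLForm) (f : GLForm → Bool) : List GLForm :=
  l.map (fun B => if f B then B else B.neg)

lemma mem_signed_pos {l : List GLForm} {f : GLForm → Bool} {B : GLForm}
    (hB : B ∈ l) (hf : f B = true) : B ∈ signed l f := by
  have : (if f B then B else B.neg) ∈ signed l f := List.mem_map_of_mem hB
  rwa [if_pos hf] at this

lemma mem_signed_neg {l : List GLForm} {f : GLForm → Bool} {B : GLForm}
    (hB : B ∈ l) (hf : f B = false) : B.neg ∈ signed l f := by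
  have : (if f B then B else B.neg) ∈ signed l f := List.mem_map_of_mem hB
  rwa [hf] at this
  -- `if false then _ else _`

lemma lindenbaum : ∀ (l : List GLForm), l.Nodup → ∀ L : List GLForm, Con L →
    ∃ f : GLForm → Bool, Con (signed l f ++ L)
  | [], _, L, hL => ⟨fun _ => false, by simpa [signed] using hL⟩
  | B :: l, hnd, L, hL => by
      have hB : B ∉ l := (List.nodup_cons.1 hnd).1
      have hnd' : l.Nodup := (List.nodup_cons.1 hnd).2
      rcases con_cases (B := B) hL with hc | hc
      · obtain ⟨f, hf⟩ := lindenbaum l hnd' (B :: L) hc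
        refine ⟨fun C => if C = B then true else f C, ?_⟩
        have htail : l.map (fun C => if (if C = B then true else f C) = true then C else C.neg)
            = l.map (fun C => if f C = true then C else C.neg) := by
          refine List.map_congr_left ?_
          intro C hC
          have hne : C ≠ B := fun h => hB (h ▸ hC)
          simp [hne]
        have hsig : signed (B :: l) (fun C => if C = B then true else f C)
            = B :: signed l f := by
          simp only [signed, List.map_cons, htail]
          simp
        rw [hsig]
        refine Con.subset (L := signed l f ++ B :: L) (fun C hC => ?_) hf
        simp only [List.mem_cons, List.mem_append, List.mem_cons] at hC ⊢
        tauto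
      · obtain ⟨f, hf⟩ := lindenbaum l hnd' (B.neg :: L) hc
        refine ⟨fun C => if C = B then false else f C, ?_⟩
        have htail : l.map (fun C => if (if C = B then false else f C) = true then C else C.neg)
            = l.map (fun C => if f C = true then C else C.neg) := by
          refine List.map_congr_left ?_
          intro C hC
          have hne : C ≠ B := fun h => hB (h ▸ hC)
          simp [hne]
        have hsig : signed (B :: l) (fun C => if C = B then false else f C)
            = B.neg :: signed l f := by
          simp only [signed, List.map_cons, htail]
          simp
        rw [hsig]
        refine Con.subset (L := signed l f ++ B.neg :: L) (fun C hC => ?_) hf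
        simp only [List.mem_cons, List.mem_append, List.mem_cons] at hC ⊢
        tauto

lemma compat_pos {l L : List GLForm} {f : GLForm → Bool} {B : GLForm}
    (h : Con (signed l f ++ L)) (hB : B ∈ l) (hL : B ∈ L) : f B = true := by
  by_contra hf
  rw [Bool.not_eq_true] at hf
  refine h (GLProv.taut ?_)
  intro v hb hi
  rw [vList hi]
  intro hall
  have h1 := hall _ (List.mem_append_left _ (mem_signed_neg hB hf))
  have h2 := hall _ (List.mem_append_right _ hL)
  rw [GLForm.neg, hi, hb] at h1
  rw [hb]
  exact h1 h2

lemma compat_neg {l L : List GLForm} {f : GLForm → Bool} {B : GLForm}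
    (h : Con (signed l f ++ L)) (hB : B ∈ l) (hL : B.neg ∈ L) : f B = false := by
  by_contra hf
  rw [Bool.not_eq_false] at hf
  refine h (GLProv.taut ?_)
  intro v hb hi
  rw [vList hi]
  intro hall
  have h1 := hall _ (List.mem_append_right _ hL)
  have h2 := hall _ (List.mem_append_left _ (mem_signed_pos hB hf))
  rw [GLForm.neg, hi, hb] at h1
  rw [hb]
  exact h1 h2

/-- Subformulas. -/
def subfs : GLForm → List GLForm
  | .bot => [.bot]
  | .var n => [.var n]
  | .imp B C => .imp B C :: (subfs B ++ subfs C)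
  | .box B => .box B :: subfs B

lemma mem_subfs_self : ∀ B : GLForm, B ∈ subfs B
  | .bot => by simp [subfs]
  | .var n => by simp [subfs]
  | .imp B C => by simp [subfs]
  | .box B => by simp [subfs]

lemma subfs_trans : ∀ {A C D : GLForm}, C ∈ subfs A → D ∈ subfs C → D ∈ subfs A
  | .bot, C, D, hC, hD => by
      simp only [subfs, List.mem_singleton] at hC
      subst hC; exact hD
  | .var n, C, D, hC, hD => by
      simp only [subfs, List.mem_singleton] at hC
      subst hC; exact hD
  | .imp A B, C, D, hC, hD => by
      simp only [subfs, List.mem_cons, List.mem_append] at hC ⊢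
      rcases hC with rfl | hC | hC
      · simp only [subfs, List.mem_cons, List.mem_append] at hD
        exact hD
      · exact Or.inr (Or.inl (subfs_trans hC hD))
      · exact Or.inr (Or.inr (subfs_trans hC hD))
  | .box A, C, D, hC, hD => by
      simp only [subfs, List.mem_cons] at hC ⊢
      rcases hC with rfl | hC
      · simp only [subfs, List.mem_cons] at hD
        exact hD
      · exact Or.inr (subfs_trans hC hD)

end GLAux

namespace GLAux
open GLForm

/-- Kripke satisfaction for GL formulas. -/
def gsat {W : Type} (R : W → W → Prop) (pv : W → ℕ → Prop) : W → GLForm → Prop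
  | _, .bot => False
  | w, .var n => pv w n
  | w, .imp B C => gsat R pv w B → gsat R pv w C
  | w, .box B => ∀ u, R w u → gsat R pv u B

def isB : GLForm → Bool
  | .box _ => true
  | _ => false

section Canonical

variable (A : GLForm)

def Phi : List GLForm := (subfs A).dedup

lemma Phi_nodup : (Phi A).Nodup := List.nodup_dedup _

lemma Phi_closed {C D : GLForm} (hC : C ∈ Phi A) (hD : D ∈ subfs C) : D ∈ Phi A := by
  rw [Phi, List.mem_dedup] at hC ⊢
  exact subfs_trans hC hD

def World : Type := {f : GLForm → Bool // Con (signed (Phi A) f)}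

def Rc (w u : World A) : Prop :=
  (∀ C : GLForm, C.box ∈ Phi A → w.1 C.box = true → u.1 C.box = true ∧ u.1 C = true) ∧
  ∃ C : GLForm, C.box ∈ Phi A ∧ u.1 C.box = true ∧ w.1 C.box = false

lemma Rc_trans : Transitive (Rc A) := by
  rintro w u x ⟨h1, C, hC, huC, hwC⟩ ⟨h2, _⟩
  refine ⟨fun D hD hwD => ?_, ⟨C, hC, (h2 C hC huC).1, hwC⟩⟩
  exact h2 D hD (h1 D hD hwD).1

noncomputable def mb (w : World A) : ℕ :=
  (((Phi A).filter (fun D => w.1 D && isB D)).toFinset).card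

lemma mb_lt {w u : World A} (h : Rc A w u) : mb A w < mb A u := by
  obtain ⟨h1, C, hC, huC, hwC⟩ := h
  have hsub : ((Phi A).filter (fun D => w.1 D && isB D)).toFinset ⊆
      ((Phi A).filter (fun D => u.1 D && isB D)).toFinset := by
    intro D hD
    rw [List.mem_toFinset, List.mem_filter] at hD ⊢
    obtain ⟨hDP, hDb⟩ := hD
    rw [Bool.and_eq_true] at hDb
    obtain ⟨hDw, hDisB⟩ := hDb
    refine ⟨hDP, ?_⟩
    cases D with
    | box E =>
        have := (h1 E hDP hDw).1
        simp [this, isB]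
    | bot => simp [isB] at hDisB
    | var n => simp [isB] at hDisB
    | imp _ _ => simp [isB] at hDisB
  refine Finset.card_lt_card ((Finset.ssubset_iff_of_subset hsub).2 ⟨C.box, ?_, ?_⟩)
  · rw [List.mem_toFinset, List.mem_filter]
    exact ⟨hC, by simp [huC, isB]⟩
  · rw [List.mem_toFinset, List.mem_filter]
    intro hmem
    rw [hwC] at hmem
    simp at hmem

lemma mb_le (w : World A) : mb A w ≤ (Phi A).length :=
  le_trans (List.toFinset_card_le _) (List.length_filter_le _ _)

lemma Rc_wf : WellFounded (fun u w => Rc A w u) := by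
  have hsub : Subrelation (fun u w : World A => Rc A w u)
      (InvImage (· < ·) (fun w => (Phi A).length - mb A w)) := by
    intro u w h
    exact Nat.sub_lt_sub_left (lt_of_lt_of_le (mb_lt A h) (mb_le A u)) (mb_lt A h)
  exact hsub.wf (InvImage.wf _ (Nat.lt_wfRel.wf))

lemma box_witness {w : World A} {B : GLForm} (hmem : B.box ∈ Phi A) (hB : B ∈ Phi A)
    (hw : w.1 B.box = false) :
    ∃ u : World A, Rc A w u ∧ u.1 B = false := by
  classical
  set bl : List GLForm := (Phi A).filterMap (fun D => match D with
    | .box C => if w.1 C.box then some C else none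
    | _ => none) with hbl
  have hblmem : ∀ C, C ∈ bl → C.box ∈ Phi A ∧ w.1 C.box = true := by
    intro C hC
    rw [hbl, List.mem_filterMap] at hC
    obtain ⟨D, hD, hg⟩ := hC
    cases D with
    | box C' =>
        by_cases h' : w.1 C'.box = true
        · simp only [h', if_pos] at hg
          cases hg
          exact ⟨hD, h'⟩
        · rw [Bool.not_eq_true] at h'
          simp [h'] at hg
    | bot => simp at hg
    | var n => simp at hg
    | imp _ _ => simp at hg
  have hmembl : ∀ C : GLForm, C.box ∈ Phi A → w.1 C.box = true → C ∈ bl := by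
    intro C hCP hCw
    rw [hbl, List.mem_filterMap]
    exact ⟨C.box, hCP, by simp [hCw]⟩
  set L0 : List GLForm := B.neg :: B.box :: (bl.map .box ++ bl) with hL0
  have hcon : Con L0 := by
    intro hp
    have step1 : GLProv (listImp (bl.map .box ++ bl) ((B.box).imp B)) := by
      rw [hL0] at hp
      refine cut hp ?_
      intro v hb hi
      simp only [listImp_cons, GLForm.neg, hi, hb, vList hi]
      intro h1 hall hbox
      by_contra hB'
      exact h1 (fun hv => absurd hv hB') hbox hall
    have step2 := boxContext step1
    have hlist : ((bl.map GLForm.box ++ bl).map GLForm.box)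
        = bl.map (fun C => C.box.box) ++ bl.map (fun C => C.box) := by
      simp [List.map_append, List.map_map, Function.comp]
    rw [hlist] at step2
    have step3 := listImp_mp step2 (GLProv.lob B)
    rw [listImp_append] at step3
    have step4 := unbox step3
    apply w.2
    refine cut step4 ?_
    intro v hb hi
    simp only [vList hi, hi, hb]
    intro h hall
    have hbv : ∀ C ∈ bl.map (fun C : GLForm => C.box), v C := by
      intro C hC
      rw [List.mem_map] at hC
      obtain ⟨C', hC', rfl⟩ := hC
      exact hall _ (mem_signed_pos (hblmem C' hC').1 (hblmem C' hC').2)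
    have hvB := h hbv hbv
    have hneg := hall _ (mem_signed_neg hmem hw)
    rw [GLForm.neg, hi, hb] at hneg
    exact hneg hvB
  obtain ⟨f, hf⟩ := lindenbaum (Phi A) (Phi_nodup A) L0 hcon
  have hworld : Con (signed (Phi A) f) :=
    Con.subset (fun C hC => List.mem_append_left _ hC) hf
  refine ⟨⟨f, hworld⟩, ⟨fun C hCP hCw => ?_, ⟨B, hmem, ?_, hw⟩⟩, ?_⟩
  · have hCbl : C ∈ bl := hmembl C hCP hCw
    have hCPhi : C ∈ Phi A := Phi_closed A hCP (by
      show C ∈ subfs (C.box)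
      simp [subfs, mem_subfs_self C])
    constructor
    · refine compat_pos hf hCP ?_
      rw [hL0]
      exact List.mem_cons_of_mem _ (List.mem_cons_of_mem _
        (List.mem_append_left _ (List.mem_map_of_mem hCbl)))
    · refine compat_pos hf hCPhi ?_
      rw [hL0]
      exact List.mem_cons_of_mem _ (List.mem_cons_of_mem _ (List.mem_append_right _ hCbl))
  · refine compat_pos hf hmem ?_
    rw [hL0]
    exact List.mem_cons_of_mem _ List.mem_cons_self
  · refine compat_neg hf hB ?_
    rw [hL0]
    exact List.mem_cons_self

lemma truth : ∀ B : GLForm, B ∈ Phi A → ∀ w : World A,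
    gsat (Rc A) (fun w n => w.1 (.var n) = true) w B ↔ w.1 B = true := by
  intro B
  induction B with
  | bot =>
      intro hmem w
      simp only [gsat]
      constructor
      · exact False.elim
      · intro hbt
        apply w.2
        refine GLProv.taut ?_
        intro v hb hi
        rw [vList hi]
        intro hall
        exact hall _ (mem_signed_pos hmem hbt)
  | var n =>
      intro hmem w
      exact Iff.rfl
  | imp B C ihB ihC =>
      intro hmem w
      have hBm : B ∈ Phi A := Phi_closed A hmem (by
        show B ∈ subfs (B.imp C)
        simp [subfs, mem_subfs_self B])
      have hCm : C ∈ Phi A := Phi_closed A hmem (by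
        show C ∈ subfs (B.imp C)
        simp [subfs, mem_subfs_self C])
      simp only [gsat, ihB hBm w, ihC hCm w]
      constructor
      · intro h
        by_contra hBC
        rw [Bool.not_eq_true] at hBC
        by_cases hBw : w.1 B = true
        · have hCw := h hBw
          apply w.2
          refine GLProv.taut ?_
          intro v hb hi
          rw [vList hi]
          intro hall
          have h1 := hall _ (mem_signed_neg hmem hBC)
          have h2 := hall _ (mem_signed_pos hCm hCw)
          rw [GLForm.neg, hi] at h1
          exact h1 ((hi B C).2 fun _ => h2)
        · rw [Bool.not_eq_true] at hBw
          apply w.2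
          refine GLProv.taut ?_
          intro v hb hi
          rw [vList hi]
          intro hall
          have h1 := hall _ (mem_signed_neg hmem hBC)
          have h2 := hall _ (mem_signed_neg hBm hBw)
          rw [GLForm.neg, hi] at h1 h2
          refine h1 ((hi B C).2 fun hvB => ?_)
          exact absurd (h2 hvB) (by rw [hb]; exact id)
      · intro hBC hBw
        by_contra hCw
        rw [Bool.not_eq_true] at hCw
        apply w.2
        refine GLProv.taut ?_
        intro v hb hi
        rw [vList hi]
        intro hall
        have h1 := hall _ (mem_signed_pos hmem hBC)
        have h2 := hall _ (mem_signed_pos hBm hBw)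
        have h3 := hall _ (mem_signed_neg hCm hCw)
        rw [hi] at h1
        rw [GLForm.neg, hi] at h3
        exact h3 (h1 h2)
  | box B ihB =>
      intro hmem w
      have hBm : B ∈ Phi A := Phi_closed A hmem (by
        show B ∈ subfs B.box
        simp [subfs, mem_subfs_self B])
      simp only [gsat]
      constructor
      · intro h
        by_contra hbox
        rw [Bool.not_eq_true] at hbox
        obtain ⟨u, hRu, hufalse⟩ := box_witness A hmem hBm hbox
        have := (ihB hBm u).1 (h u hRu)
        rw [this] at hufalse
        simp at hufalse
      · intro hbox u hRu
        exact (ihB hBm u).2 (hRu.1 B hmem hbox).2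

end Canonical

lemma gl_complete {A : GLForm} (h : ¬ GLProv A) :
    ∃ (W : Type) (R : W → W → Prop) (pv : W → ℕ → Prop),
      Transitive R ∧ WellFounded (fun x y => R y x) ∧ ∃ w, ¬ gsat R pv w A := by
  have hConA : Con [A.neg] := by
    intro hp
    refine h (cut hp ?_)
    intro v hb hi
    simp only [listImp_cons, listImp_nil, GLForm.neg, hi, hb]
    tauto
  obtain ⟨f, hf⟩ := lindenbaum (Phi A) (Phi_nodup A) _ hConA
  have hworld : Con (signed (Phi A) f) :=
    Con.subset (fun C hC => List.mem_append_left _ hC) hf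
  have hAPhi : A ∈ Phi A := by
    rw [Phi, List.mem_dedup]
    exact mem_subfs_self A
  have hAf : f A = false := compat_neg hf hAPhi (by simp)
  refine ⟨World A, Rc A, fun w n => w.1 (.var n) = true, Rc_trans A, Rc_wf A,
    ⟨f, hworld⟩, ?_⟩
  intro hs; have := (truth A A hAPhi ⟨f, hworld⟩).1 hs; revert this
  simp [hAf]

end GLAux

namespace ILAux
open ILForm

variable {W : Type} (R : W → W → Prop) (S : W → W → W → Prop)

/-- Veltman satisfaction for IL formulas. -/
def vsat : W → ILForm → Prop
  | _, .bot => False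
  | _, .var _ => False
  | x, .imp A B => vsat x A → vsat x B
  | x, .box A => ∀ y, R x y → vsat y A
  | x, .rhd A B => ∀ u, R x u → vsat u A → ∃ v, S x u v ∧ vsat v B

lemma vsat_neg {x : W} {A : ILForm} : vsat R S x A.neg ↔ ¬ vsat R S x A := Iff.rfl

lemma vsat_conj {x : W} {A B : ILForm} :
    vsat R S x (A.conj B) ↔ vsat R S x A ∧ vsat R S x B := by
  simp only [ILForm.conj, ILForm.neg, vsat]
  tauto

lemma vsat_dia {x : W} {A : ILForm} :
    vsat R S x A.dia ↔ ∃ y, R x y ∧ vsat R S y A := by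
  simp only [ILForm.dia, ILForm.neg, vsat]
  constructor
  · intro h
    by_contra hc
    push_neg at hc
    exact h fun y hy hA => (hc y hy) hA
  · rintro ⟨y, hy, hA⟩ h
    exact h y hy hA

lemma il_sound (htrans : Transitive R) (hwf : WellFounded (fun x y => R y x))
    (hS1 : ∀ w u v, S w u v → R w v) (hS2 : ∀ w u, R w u → S w u u)
    (hS3 : ∀ w u v z, S w u v → S w v z → S w u z)
    (hS4 : ∀ w u v, R w u → R u v → S w u v)
    {B : ILForm} (h : ILProv B) : ∀ x, vsat R S x B := by
  induction h with
  | @taut A t =>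
      intro x
      exact t (vsat R S x) Iff.rfl (fun _ _ => Iff.rfl)
  | distr A B =>
      intro x h1 h2 y hy
      exact h1 y hy (h2 y hy)
  | lob A =>
      intro x h1
      intro y
      induction y using WellFounded.induction hwf with
      | _ y ih =>
          intro hy
          have hbox : vsat R S y A.box := fun z hz => ih z hz (htrans hy hz)
          exact h1 y hy hbox
  | J1 A B =>
      intro x h1 u hu hA
      exact ⟨u, hS2 _ _ hu, h1 u hu hA⟩
  | J2 A B C =>
      intro x h12 u hu hA
      rw [vsat_conj] at h12
      obtain ⟨v, hSv, hB⟩ := h12.1 u hu hA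
      obtain ⟨z, hSz, hC⟩ := h12.2 v (hS1 _ _ _ hSv) hB
      exact ⟨z, hS3 _ _ _ _ hSv hSz, hC⟩
  | J3 A B C =>
      intro x h12 u hu hAB
      rw [vsat_conj] at h12
      by_cases hA : vsat R S u A
      · exact h12.1 u hu hA
      · exact h12.2 u hu (hAB hA)
  | J4 A B =>
      intro x h1 h2
      rw [vsat_dia] at h2 ⊢
      obtain ⟨y, hy, hA⟩ := h2
      obtain ⟨v, hSv, hB⟩ := h1 y hy hA
      exact ⟨v, hS1 _ _ _ hSv, hB⟩
  | J5 A =>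
      intro x u hu hdia
      rw [vsat_dia] at hdia
      obtain ⟨y, hy, hA⟩ := hdia
      exact ⟨y, hS4 _ _ _ hu hy, hA⟩
  | mp h1 h2 ih1 ih2 =>
      intro x
      exact ih1 x (ih2 x)
  | nec h1 ih =>
      intro x y hy
      exact ih y

end ILAux

namespace Trans
open ILForm GLAux ILAux

variable {W0 : Type} (R0 : W0 → W0 → Prop) (pv : W0 → ℕ → Prop)

/-- The accessibility relation of the Veltman model built on a GL model:
each world `w` gets a copy `(w,0)` together with gadget worlds
`(w,1)` (a dead end), `(w,2)` (whose only successor is `(w,3)`) and `(w,3)`. -/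
def RV (x y : W0 × ℕ) : Prop :=
  (x.2 = 0 ∧ (R0 x.1 y.1 ∨ (x.1 = y.1 ∧ y.2 ≠ 0))) ∨ (x.2 = 2 ∧ x.1 = y.1 ∧ y.2 = 3)

/-- The `S` relations: at a main world `(w,0)` where `p` holds, `S` is the full
relation; everywhere else it is the reflexive closure of `RV`. -/
def SV (x u v : W0 × ℕ) : Prop :=
  RV R0 x u ∧ RV R0 x v ∧ (u = v ∨ RV R0 u v ∨ (x.2 = 0 ∧ pv x.1 0))

lemma RV_trans (htrans : Transitive R0) : Transitive (RV R0) := by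
  rintro x y z hxy hyz
  rcases hxy with ⟨hx0, hxy⟩ | ⟨hx2, hxy1, hxy2⟩
  · rcases hyz with ⟨hy0, hyz⟩ | ⟨hy2, hyz1, hyz2⟩
    · rcases hxy with hR | ⟨heq, hne⟩
      · rcases hyz with hR' | ⟨heq', hne'⟩
        · exact Or.inl ⟨hx0, Or.inl (htrans hR hR')⟩
        · exact Or.inl ⟨hx0, Or.inl (heq' ▸ hR)⟩
      · exact absurd hy0 hne
    · rcases hxy with hR | ⟨heq, hne⟩
      · exact Or.inl ⟨hx0, Or.inl (hyz1 ▸ hR)⟩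
      · exact Or.inl ⟨hx0, Or.inr ⟨heq.trans hyz1, by rw [hyz2]; simp⟩⟩
  · rcases hyz with ⟨hy0, _⟩ | ⟨hy2, _, _⟩
    · rw [hxy2] at hy0; simp at hy0
    · rw [hxy2] at hy2; simp at hy2

def rk (n : ℕ) : ℕ := if n = 0 then 2 else if n = 2 then 1 else 0

lemma RV_wf (hwf : WellFounded fun a b => R0 b a) :
    WellFounded (fun x y => RV R0 y x) := by
  have hlex : WellFounded (Prod.Lex (fun a b => R0 b a) ((· < ·) : ℕ → ℕ → Prop)) :=
    WellFounded.prod_lex hwf Nat.lt_wfRel.wf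
  have hsub : Subrelation (fun x y : W0 × ℕ => RV R0 y x)
      (InvImage (Prod.Lex (fun a b => R0 b a) (· < ·)) (fun x => (x.1, rk x.2))) := by
    intro x y h
    rcases h with ⟨hy0, hR | ⟨heq, hne⟩⟩ | ⟨hy2, heq, hx3⟩
    · exact Prod.Lex.left _ _ hR
    · show Prod.Lex _ _ (x.1, rk x.2) (y.1, rk y.2)
      rw [heq, hy0]
      refine Prod.Lex.right _ ?_
      show rk x.2 < rk 0
      simp only [rk, if_pos rfl]
      rcases eq_or_ne x.2 2 with h2 | h2
      · simp [h2]
      · simp [hne, h2]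
    · show Prod.Lex _ _ (x.1, rk x.2) (y.1, rk y.2)
      rw [heq, hy2, hx3]
      refine Prod.Lex.right _ ?_
      simp [rk]
  exact hsub.wf (InvImage.wf _ hlex)

lemma SV1 : ∀ w u v, SV R0 pv w u v → RV R0 w v := fun _ _ _ h => h.2.1

lemma SV2 : ∀ w u, RV R0 w u → SV R0 pv w u u := fun _ _ h => ⟨h, h, Or.inl rfl⟩

lemma SV3 (htrans : Transitive R0) : ∀ w u v z,
    SV R0 pv w u v → SV R0 pv w v z → SV R0 pv w u z := by
  rintro w u v z ⟨h1, h2, h3⟩ ⟨h4, h5, h6⟩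
  refine ⟨h1, h5, ?_⟩
  rcases h3 with rfl | h3 | h3
  · exact h6
  · rcases h6 with rfl | h6 | h6
    · exact Or.inr (Or.inl h3)
    · exact Or.inr (Or.inl (RV_trans R0 htrans h3 h6))
    · exact Or.inr (Or.inr h6)
  · exact Or.inr (Or.inr h3)

lemma SV4 (htrans : Transitive R0) : ∀ w u v,
    RV R0 w u → RV R0 u v → SV R0 pv w u v :=
  fun _ _ _ h1 h2 => ⟨h1, RV_trans R0 htrans h1 h2, Or.inr (Or.inl h2)⟩

lemma no_succ {w : W0} {j : ℕ} (hj : j ≠ 0) (hj2 : j ≠ 2) (y : W0 × ℕ) :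
    ¬ RV R0 (w, j) y := by
  rintro (⟨h0, _⟩ | ⟨h2, _, _⟩)
  · exact hj h0
  · exact hj2 h2

lemma vsat_top {S : W0 × ℕ → W0 × ℕ → W0 × ℕ → Prop} {x : W0 × ℕ} :
    vsat (RV R0) S x ILForm.top := id

lemma diatop_iff {S : W0 × ℕ → W0 × ℕ → W0 × ℕ → Prop} {x : W0 × ℕ} :
    vsat (RV R0) S x ILForm.top.dia ↔ ∃ y, RV R0 x y := by
  rw [vsat_dia]
  constructor
  · rintro ⟨y, hy, _⟩; exact ⟨y, hy⟩
  · rintro ⟨y, hy⟩; exact ⟨y, hy, vsat_top R0⟩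

lemma ddtop_iff {S : W0 × ℕ → W0 × ℕ → W0 × ℕ → Prop} {x : W0 × ℕ} :
    vsat (RV R0) S x ILForm.top.dia.dia ↔ x.2 = 0 := by
  rw [vsat_dia]
  constructor
  · rintro ⟨y, hxy, hy⟩
    rw [diatop_iff] at hy
    obtain ⟨z, hyz⟩ := hy
    rcases hxy with ⟨h0, _⟩ | ⟨_, heq, h3⟩
    · exact h0
    · exfalso
      obtain ⟨y1, y2⟩ := y
      simp only at h3
      subst h3
      exact no_succ R0 (by simp) (by simp) z hyz
  · intro h0
    refine ⟨(x.1, 2), Or.inl ⟨h0, Or.inr ⟨rfl, by simp⟩⟩, ?_⟩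
    rw [diatop_iff]
    exact ⟨(x.1, 3), Or.inr ⟨rfl, rfl, rfl⟩⟩

lemma pdag_iff {w : W0} :
    vsat (RV R0) (SV R0 pv) (w, 0) pDag ↔ pv w 0 := by
  have hdd : vsat (RV R0) (SV R0 pv) (w, 0) ILForm.top.dia.dia :=
    (ddtop_iff R0).2 rfl
  constructor
  · intro h
    by_contra hp
    obtain ⟨v, hSv, hdia⟩ :=
      h hdd (w, 1) (Or.inl ⟨rfl, Or.inr ⟨rfl, by simp⟩⟩) (vsat_top R0)
    rw [diatop_iff] at hdia
    obtain ⟨z, hvz⟩ := hdia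
    rcases hSv.2.2 with rfl | hRv | ⟨_, hfl⟩
    · exact no_succ R0 (by simp) (by simp) z hvz
    · exact no_succ R0 (by simp) (by simp) v hRv
    · exact hp hfl
  · intro hp _ u hu _
    refine ⟨(w, 2), ⟨hu, Or.inl ⟨rfl, Or.inr ⟨rfl, by simp⟩⟩, Or.inr (Or.inr ⟨rfl, hp⟩)⟩, ?_⟩
    rw [diatop_iff]
    exact ⟨(w, 3), Or.inr ⟨rfl, rfl, rfl⟩⟩

lemma dag_truth : ∀ {B : GLForm}, B.onlyP → ∀ w : W0,
    vsat (RV R0) (SV R0 pv) (w, 0) (dag B) ↔ gsat R0 pv w B := by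
  intro B
  induction B with
  | bot => exact fun _ _ => Iff.rfl
  | var n =>
      intro hp w
      have hn : n = 0 := hp
      subst hn
      exact pdag_iff R0 pv
  | imp B C ihB ihC =>
      intro hp w
      exact imp_congr (ihB hp.1 w) (ihC hp.2 w)
  | box B ihB =>
      intro hp w
      show (∀ y, RV R0 (w, 0) y → vsat _ _ y ((ILForm.top.dia.dia).imp (dag B)))
        ↔ (∀ u, R0 w u → gsat R0 pv u B)
      constructor
      · intro h u hu
        exact (ihB hp u).1 (h (u, 0) (Or.inl ⟨rfl, Or.inl hu⟩) ((ddtop_iff R0).2 rfl))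
      · intro h y hy hdd
        rw [ddtop_iff] at hdd
        have hR : R0 w y.1 := by
          rcases hy with ⟨_, hR | ⟨_, hne⟩⟩ | ⟨h2, _⟩
          · exact hR
          · exact absurd hdd hne
          · simp at h2
        obtain ⟨y1, y2⟩ := y
        simp only at hdd
        subst hdd
        exact (ihB hp y1).2 (h y1 hR)

end Trans


/-- If a formula `A` of the modal language with a single unary modality `□`
contains at most the propositional variable `p` and `IL ⊢ A†`, then `GL ⊢ A`. -/
theorem IL_proves_dag_implies_GL_proves (A : GLForm) (hA : A.onlyP)
    (h : ILProv (dag A)) : GLProv A := by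
  by_contra hGL
  obtain ⟨W, R, pv, htrans, hwf, w, hw⟩ := GLAux.gl_complete hGL
  apply hw
  have hsound := ILAux.il_sound (Trans.RV R) (Trans.SV R pv)
    (Trans.RV_trans R htrans) (Trans.RV_wf R hwf)
    (Trans.SV1 R pv) (Trans.SV2 R pv) (Trans.SV3 R pv htrans) (Trans.SV4 R pv htrans)
    h (w, 0)
  exact (Trans.dag_truth R pv hA w).1 hsound
end

section
/- Let N = ⟨W, R, ⊩⟩ be a finite tree-like GL-model with set of end-points E = {e₁, …, e_l}, and let E♭ = {e₁♭, …, e_l♭} and E♮ = {e₁♮, …, e_l♮} be two disjoint copies of E, also disjoint from W. Then there exists a unique Veltman frame ⟨W', R', {S'_x : x ∈ W'}⟩ satisfying: W' = W ⊎ E♭ ⊎ E♮; R' is the transitive closure of R ∪ {(e, e♭) : e ∈ E} ∪ {(e♭, e♮) : e ∈ E}; S'_{e♭} = {(e♮, e♮)} for every e ∈ E; S'_{e♮} = ∅ for every e ∈ E; and for every x ∈ W, S'_x is the smallest transitive and reflexive relation on {y : x R' y} containing both S_x and the restriction of R' to {y : x R' y} such that for every e ∈ E, (e♮, e♭) ∈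 S'_x iff N, x ⊩ p and (xRe or x = e). In particular, R' is transitive and conversely well-founded and each S'_x satisfies the Veltman frame conditions. -/
/-- Kripke forcing for the language with `□`, over a frame `(W, R)` with
valuation `v` (variable number `0` is the variable `p`). -/
def KSat {W : Type} (R : W → W → Prop) (v : W → ℕ → Prop) : W → GLForm → Prop
  | x, .bot => False
  | x, .var n => v x n
  | x, .imp A B => KSat R v x A → KSat R v x B
  | x, .box A => ∀ y, R x y → KSat R v y A

/-- Veltman forcing for the interpretability language, over `(W, R, S)` with
valuation `v`:  `x ⊩ □A` iff every `R`-successor of `x` forces `A`, and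
`x ⊩ A ▷ B` iff every `R`-successor of `x` forcing `A` has an `S x`-successor
forcing `B`. -/
def ILSat {W : Type} (R : W → W → Prop) (S : W → W → W → Prop)
    (v : W → ℕ → Prop) : W → ILForm → Prop
  | x, .bot => False
  | x, .var n => v x n
  | x, .imp A B => ILSat R S v x A → ILSat R S v x B
  | x, .box A => ∀ y, R x y → ILSat R S v y A
  | x, .rhd A B => ∀ y, R x y → ILSat R S v y A → ∃ z, S x y z ∧ ILSat R S v z B

/-- A `GL`-model: a Kripke model whose accessibility relation is transitive
and conversely well-founded. -/
structure GLModel where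
  W : Type
  nonempty : Nonempty W
  R : W → W → Prop
  val : W → ℕ → Prop
  trans : Transitive R
  cwf : WellFounded (Function.swap R)

/-- A Veltman model (`IL`-model): `R` is transitive and conversely
well-founded, each `S x` is transitive, reflexive on the `R`-successors of
`x`, relates only `R`-successors of `x`, and contains `R` restricted to the
`R`-successors of `x`. -/
structure VeltmanModel where
  W : Type
  nonempty : Nonempty W
  R : W → W → Prop
  S : W → W → W → Prop
  val : W → ℕ → Prop
  R_trans : Transitive R
  R_cwf : WellFounded (Function.swap R)
  S_trans : ∀ x, Transitive (S x)
  S_refl : ∀ x y, R x y → S x y y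
  S_dom : ∀ x y z, S x y z → R x y ∧ R x z
  S_of_R : ∀ x y z, R x y → R y z → S x y z

/-- `e` is an end-point of the model: a world with no `R`-successors. -/
def GLModel.IsEndpoint (N : GLModel) (e : N.W) : Prop := ∀ y, ¬ N.R e y

/-- `N` is a finite tree-like `GL`-model: its set of worlds is finite, it has
a root below every other world, and its (transitive) accessibility relation is
the strict descendant relation of a tree, i.e. the predecessors of any world
are linearly ordered by `R`. -/
def GLModel.FiniteTreeLike (N : GLModel) : Prop :=
  Finite N.W ∧ (∃ r : N.W, ∀ x, x = r ∨ N.R r x) ∧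
    ∀ x y z : N.W, N.R x z → N.R y z → (N.R x y ∨ x = y ∨ N.R y x)

/-- The set `E` of end-points of `N`. -/
def Endpoints (N : GLModel) : Type := {e : N.W // N.IsEndpoint e}

/-- The extended set of worlds `W' = W ⊎ E♭ ⊎ E♮` (two fresh disjoint copies of
the end-points are added). -/
def Wext (N : GLModel) : Type := N.W ⊕ (Endpoints N ⊕ Endpoints N)

/-- The copy of an old world `x ∈ W` inside `W'`. -/
def old (N : GLModel) (x : N.W) : Wext N := Sum.inl x

/-- The world `e♭` added above the end-point `e`. -/
def flatPt (N : GLModel) (e : Endpoints N) : Wext N := Sum.inr (Sum.inl e)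

/-- The world `e♮` added above `e♭`. -/
def natPt (N : GLModel) (e : Endpoints N) : Wext N := Sum.inr (Sum.inr e)

/-- The relation `R ∪ {(e, e♭) : e ∈ E} ∪ {(e♭, e♮) : e ∈ E}` on `W'`,
whose transitive closure is the new accessibility relation `R'`. -/
def baseR (N : GLModel) : Wext N → Wext N → Prop :=
  fun a b =>
    match a, b with
    | Sum.inl x, Sum.inl y => N.R x y
    | Sum.inl x, Sum.inr (Sum.inl e) => x = e.val
    | Sum.inr (Sum.inl e), Sum.inr (Sum.inr e') => e = e'
    | _, _ => False

/-- The new accessibility relation `R'`: the transitive closure of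
`R ∪ {(e, e♭) : e ∈ E} ∪ {(e♭, e♮) : e ∈ E}`. -/
def Rext (N : GLModel) : Wext N → Wext N → Prop := Relation.TransGen (baseR N)

/-- The conditions required of `S'_x` for an old world `x ∈ W`, relative to a
candidate relation `T`: `T` is a transitive and reflexive relation on
`{y : x R' y}` which contains (the original `S_x`, which is empty, and) the
restriction of `R'` to `{y : x R' y}`, and such that for every end-point `e`,
`(e♮, e♭) ∈ T` iff `N, x ⊩ p` and `x R⁼ e`. -/
def OldSCond (N : GLModel) (x : N.W) (T : Wext N → Wext N → Prop) : Prop :=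
  Transitive T ∧
  (∀ y, Rext N (old N x) y → T y y) ∧
  (∀ y z, T y z → Rext N (old N x) y ∧ Rext N (old N x) z) ∧
  (∀ y z, Rext N (old N x) y → Rext N (old N x) z → Rext N y z → T y z) ∧
  (∀ e : Endpoints N,
    T (natPt N e) (flatPt N e) ↔ (N.val x 0 ∧ (N.R x e.val ∨ x = e.val)))

/-- The defining conditions on the family `S'` of the extended frame:
`S'_{e♭} = {(e♮, e♮)}`, `S'_{e♮} = ∅`, and for every old world `x ∈ W`, `S'_x`
is the smallest relation satisfying `OldSCond`. -/
def SCond (N : GLModel) (S' : Wext N → Wext N → Wext N → Prop) : Prop :=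
  (∀ (e : Endpoints N) (y z : Wext N),
    S' (flatPt N e) y z ↔ (y = natPt N e ∧ z = natPt N e)) ∧
  (∀ (e : Endpoints N) (y z : Wext N), ¬ S' (natPt N e) y z) ∧
  (∀ x : N.W, OldSCond N x (S' (old N x)) ∧
    ∀ T : Wext N → Wext N → Prop, OldSCond N x T →
      ∀ y z, S' (old N x) y z → T y z)

/-- The Veltman frame conditions for a frame `(W', R', S')`: `R'` is
transitive and conversely well-founded, each `S'_x` is transitive, reflexive
on the `R'`-successors of `x`, relates only `R'`-successors of `x`, and
`x R' y R' z` implies `y S'_x z`. -/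
def VeltmanFrameConds {W' : Type} (R' : W' → W' → Prop)
    (S' : W' → W' → W' → Prop) : Prop :=
  Transitive R' ∧ WellFounded (Function.swap R') ∧
  (∀ x, Transitive (S' x)) ∧ (∀ x y, R' x y → S' x y y) ∧
  (∀ x y z, S' x y z → R' x y ∧ R' x z) ∧
  (∀ x y z, R' x y → R' y z → S' x y z)

section Aux

variable {N : GLModel}

lemma baseR_nat_false {e : Endpoints N} {b : Wext N} : ¬ baseR N (natPt N e) b := by
  rcases b with x | e' | e' <;> exact fun h => h

lemma not_rext_nat {e : Endpoints N} {b : Wext N} : ¬ Rext N (natPt N e) b := by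
  intro h
  rcases Relation.TransGen.head'_iff.mp h with ⟨c, hc, -⟩
  exact baseR_nat_false hc

lemma baseR_to_nat {c : Wext N} {e : Endpoints N} (h : baseR N c (natPt N e)) :
    c = flatPt N e := by
  rcases c with x | e' | e'
  · exact h.elim
  · cases h; rfl
  · exact h.elim

lemma baseR_to_flat {c : Wext N} {e : Endpoints N} (h : baseR N c (flatPt N e)) :
    c = old N e.val := by
  rcases c with x | e' | e'
  · cases h; rfl
  · exact h.elim
  · exact h.elim

lemma rext_flat {e : Endpoints N} {b : Wext N} (h : Rext N (flatPt N e) b) :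
    b = natPt N e := by
  rcases Relation.TransGen.head'_iff.mp h with ⟨c, hc, hcb⟩
  have hc' : c = natPt N e := by
    rcases c with x | e' | e'
    · exact hc.elim
    · exact hc.elim
    · cases hc; rfl
  subst hc'
  rcases Relation.reflTransGen_iff_eq_or_transGen.mp hcb with rfl | h'
  · rfl
  · exact absurd h' not_rext_nat

lemma rext_to_old {a b : Wext N} (h : Rext N a b) :
    ∀ y : N.W, b = old N y → ∃ x, a = old N x ∧ N.R x y := by
  induction h with
  | single hab =>
      intro y hb
      subst hb
      rcases a with x | e | e
      · exact ⟨x, rfl, hab⟩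
      · exact hab.elim
      · exact hab.elim
  | tail _ hbc ih =>
      intro y hb
      subst hb
      rename_i b _
      rcases b with z | e | e
      · obtain ⟨x, rfl, hxz⟩ := ih z rfl
        exact ⟨x, rfl, N.trans hxz hbc⟩
      · exact hbc.elim
      · exact hbc.elim

lemma rext_old_old {x y : N.W} (h : Rext N (old N x) (old N y)) : N.R x y := by
  obtain ⟨z, hz, hr⟩ := rext_to_old h y rfl
  cases (Sum.inl.inj hz : x = z); exact hr

lemma rext_to_nat_pred {a : Wext N} {e : Endpoints N} (h : Rext N a (natPt N e)) :
    a = flatPt N e ∨ Rext N a (flatPt N e) := by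
  rcases Relation.TransGen.tail'_iff.mp h with ⟨c, hac, hc⟩
  cases baseR_to_nat hc
  rcases Relation.reflTransGen_iff_eq_or_transGen.mp hac with h' | h'
  · exact Or.inl h'.symm
  · exact Or.inr h'

lemma rext_to_flat_pred {a : Wext N} {e : Endpoints N} (h : Rext N a (flatPt N e)) :
    ∃ x, a = old N x ∧ (x = e.val ∨ N.R x e.val) := by
  rcases Relation.TransGen.tail'_iff.mp h with ⟨c, hac, hc⟩
  cases baseR_to_flat hc
  rcases Relation.reflTransGen_iff_eq_or_transGen.mp hac with h' | h'
  · exact ⟨e.val, h'.symm, Or.inl rfl⟩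
  · obtain ⟨x, rfl, hr⟩ := rext_to_old h' e.val rfl
    exact ⟨x, rfl, Or.inr hr⟩

lemma rext_old_flat {x : N.W} {e : Endpoints N} (h : x = e.val ∨ N.R x e.val) :
    Rext N (old N x) (flatPt N e) := by
  rcases h with rfl | h
  · exact Relation.TransGen.single rfl
  · exact Relation.TransGen.tail
      (Relation.TransGen.single (show baseR N (old N x) (old N e.val) from h)) rfl

lemma rext_flat_nat {e : Endpoints N} : Rext N (flatPt N e) (natPt N e) :=
  Relation.TransGen.single rfl

lemma rext_old_nat {x : N.W} {e : Endpoints N} (h : x = e.val ∨ N.R x e.val) :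
    Rext N (old N x) (natPt N e) :=
  Relation.TransGen.tail (rext_old_flat h) rfl

lemma flat_ne_nat {e e' : Endpoints N} : flatPt N e ≠ natPt N e' :=
  fun h => Sum.inl_ne_inr (Sum.inr.inj (show (Sum.inr (Sum.inl e) : N.W ⊕ (Endpoints N ⊕ Endpoints N)) = Sum.inr (Sum.inr e') from h))

lemma rext_irrefl {a : Wext N} : ¬ Rext N a a := by
  rcases a with x | e | e
  · exact fun h => (N.cwf.isIrrefl).irrefl x (rext_old_old h)
  · intro h; exact flat_ne_nat (rext_flat h)
  · exact not_rext_nat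

/-- The explicit minimal `S'`-relation for an old world. -/
def SdefOld (N : GLModel) (x : N.W) (y z : Wext N) : Prop :=
  Rext N (old N x) y ∧ Rext N (old N x) z ∧
    (Rext N y z ∨ y = z ∨
      ∃ e : Endpoints N, y = natPt N e ∧ z = flatPt N e ∧
        N.val x 0 ∧ (N.R x e.val ∨ x = e.val))

/-- The explicit family `S'`. -/
def Sdef (N : GLModel) : Wext N → Wext N → Wext N → Prop
  | Sum.inl x => SdefOld N x
  | Sum.inr (Sum.inl e) => fun y z => y = natPt N e ∧ z = natPt N e
  | Sum.inr (Sum.inr _) => fun _ _ => False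

lemma oldSCond_SdefOld (x : N.W) : OldSCond N x (SdefOld N x) := by
  refine ⟨?_, ?_, ?_, ?_, ?_⟩
  · rintro y z w ⟨hy, hz, h1⟩ ⟨-, hw, h2⟩
    refine ⟨hy, hw, ?_⟩
    rcases h1 with h1 | rfl | ⟨e, rfl, rfl, hc⟩
    · rcases h2 with h2 | rfl | ⟨e, rfl, rfl, hc⟩
      · exact Or.inl (h1.trans h2)
      · exact Or.inl h1
      · rcases rext_to_nat_pred h1 with rfl | h'
        · exact Or.inr (Or.inl rfl)
        · exact Or.inl h'
    · exact h2
    · rcases h2 with h2 | rfl | ⟨e', he', _, _⟩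
      · cases rext_flat h2
        exact Or.inr (Or.inl rfl)
      · exact Or.inr (Or.inr ⟨e, rfl, rfl, hc⟩)
      · exact absurd he' flat_ne_nat
  · exact fun y hy => ⟨hy, hy, Or.inr (Or.inl rfl)⟩
  · exact fun y z h => ⟨h.1, h.2.1⟩
  · exact fun y z hy hz h => ⟨hy, hz, Or.inl h⟩
  · intro e
    constructor
    · rintro ⟨-, -, h | h | ⟨e', he', hf', hc⟩⟩
      · exact absurd h not_rext_nat
      · exact absurd h.symm flat_ne_nat
      · cases (Sum.inr.inj (Sum.inr.inj he') : e = e')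
        exact hc
    · rintro ⟨hv, hr⟩
      have h'' : x = e.val ∨ N.R x e.val := hr.symm
      exact ⟨rext_old_nat h'', rext_old_flat h'', Or.inr (Or.inr ⟨e, rfl, rfl, hv, hr⟩)⟩

lemma SdefOld_min (x : N.W) (T : Wext N → Wext N → Prop) (hT : OldSCond N x T) :
    ∀ y z, SdefOld N x y z → T y z := by
  obtain ⟨hTt, hTr, hTd, hTR, hTiff⟩ := hT
  rintro y z ⟨hy, hz, h | rfl | ⟨e, rfl, rfl, hc⟩⟩
  · exact hTR y z hy hz h
  · exact hTr y hy
  · exact (hTiff e).mpr hc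

lemma sCond_Sdef : SCond N (Sdef N) := by
  refine ⟨fun e y z => Iff.rfl, fun e y z h => h, fun x => ⟨oldSCond_SdefOld x, ?_⟩⟩
  exact fun T hT y z h => SdefOld_min x T hT y z h

lemma sCond_unique {S₁ S₂ : Wext N → Wext N → Wext N → Prop}
    (h1 : SCond N S₁) (h2 : SCond N S₂) : S₁ = S₂ := by
  funext a y z
  apply propext
  rcases a with x | e | e
  · exact ⟨fun h => (h1.2.2 x).2 _ (h2.2.2 x).1 y z h,
      fun h => (h2.2.2 x).2 _ (h1.2.2 x).1 y z h⟩
  · exact (h1.1 e y z).trans (h2.1 e y z).symm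
  · exact ⟨fun h => absurd h (h1.2.1 e y z), fun h => absurd h (h2.2.1 e y z)⟩

end Aux

/-- Let `N = ⟨W, R, ⊩⟩` be a finite tree-like `GL`-model, with end-points `E`
and disjoint fresh copies `E♭`, `E♮` of `E`, and let `W' = W ⊎ E♭ ⊎ E♮`.  Then
there is a unique pair `(R', S')` such that `R'` is the transitive closure of
`R ∪ {(e, e♭) : e ∈ E} ∪ {(e♭, e♮) : e ∈ E}`, `S'_{e♭} = {(e♮, e♮)}`,
`S'_{e♮} = ∅`, and for every `x ∈ W`, `S'_x` is the smallest transitive and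
reflexive relation on `{y : x R' y}` containing both `S_x` (which is empty)
and the restriction of `R'` to `{y : x R' y}`, such that for every end-point
`e`, `(e♮, e♭) ∈ S'_x` iff `N, x ⊩ p` and (`x R e` or `x = e`).  Moreover any
such pair is a Veltman frame: `R'` is transitive and conversely well-founded
and the `S'_x` satisfy the Veltman frame conditions. -/

theorem unique_veltman_frame_extension (N : GLModel) (hN : N.FiniteTreeLike) :
    (∃! p : (Wext N → Wext N → Prop) × (Wext N → Wext N → Wext N → Prop),
      p.1 = Relation.TransGen (baseR N) ∧ SCond N p.2) ∧
    (∀ (R' : Wext N → Wext N → Prop) (S' : Wext N → Wext N → Wext N → Prop),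
      R' = Relation.TransGen (baseR N) → SCond N S' →
        VeltmanFrameConds R' S') := by
  constructor
  · refine ⟨(Relation.TransGen (baseR N), Sdef N), ⟨rfl, sCond_Sdef⟩, ?_⟩
    rintro ⟨R₁, S₁⟩ ⟨hR, hS⟩
    exact Prod.ext hR (sCond_unique hS sCond_Sdef)
  · rintro R' S' rfl hS
    haveI : Finite N.W := hN.1
    haveI : Finite (Endpoints N) := by unfold Endpoints; exact Subtype.finite
    haveI hfin : Finite (Wext N) := by unfold Wext; infer_instance
    have htrans : Transitive (Rext N) := fun _ _ _ h1 h2 => h1.trans h2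
    refine ⟨htrans, ?_, ?_, ?_, ?_, ?_⟩
    · haveI : IsTrans (Wext N) (Function.swap (Relation.TransGen (baseR N))) :=
        ⟨fun a b c h1 h2 => h2.trans h1⟩
      haveI : IsIrrefl (Wext N) (Function.swap (Relation.TransGen (baseR N))) :=
        ⟨fun a => rext_irrefl⟩
      exact Finite.wellFounded_of_trans_of_irrefl _
    · rintro (x | e | e)
      · exact (hS.2.2 x).1.1
      · intro y z w hyz hzw
        obtain ⟨rfl, rfl⟩ := (hS.1 e y z).mp hyz
        obtain ⟨-, rfl⟩ := (hS.1 e _ w).mp hzw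
        exact (hS.1 e _ _).mpr ⟨rfl, rfl⟩
      · intro y z w hyz _
        exact absurd hyz (hS.2.1 e y z)
    · rintro (x | e | e) y hy
      · exact (hS.2.2 x).1.2.1 y hy
      · cases rext_flat hy
        exact (hS.1 e _ _).mpr ⟨rfl, rfl⟩
      · exact absurd hy not_rext_nat
    · rintro (x | e | e) y z h
      · exact (hS.2.2 x).1.2.2.1 y z h
      · obtain ⟨rfl, rfl⟩ := (hS.1 e y z).mp h
        exact ⟨rext_flat_nat, rext_flat_nat⟩
      · exact absurd h (hS.2.1 e y z)
    · rintro (x | e | e) y z hy hz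
      · exact (hS.2.2 x).1.2.2.2.1 y z hy (htrans hy hz) hz
      · cases rext_flat hy
        exact absurd hz not_rext_nat
      · exact absurd hy not_rext_nat
end
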